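/- For every (A,b) ∈ LTA(n,2)_{h2}^{h1}, every g ∈ W, and every f ∈ (O^c_{h1} ∩ O^c_{h2}) ∖ W, the coefficient of g in (A,b)·f vanishes: ⟨(A,b)·f⟩_g = 0. -/

import Mathlib

open Finset

/-! Common setup: `R_n = F_2[x_0,…,x_{n−1}]/(x_i^2 − x_i)`.  A (squarefree) monomial is
identified with its index set `ind(g) ⊆ {0,…,n−1}`.  Reduced elements of `R_n` are
identified, via the (bijective) evaluation map `ev`, with Boolean functions
`F_2^n → F_2`, i.e. with vectors in `F_2^N` indexed by the points of `F_2^n`. -/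

/-- Monomials of `M_n`, identified with their index sets. -/
abbrev Mon (n : ℕ) := Finset (Fin n)

/-- Points of `F_2^n`. -/
abbrev Pt (n : ℕ) := Fin n → ZMod 2

/-- Elements of `R_n` (equivalently, vectors of `F_2^N`), identified with Boolean
functions via the evaluation map `ev`. -/
abbrev BF (n : ℕ) := Pt n → ZMod 2

variable {n : ℕ}

/-- `ev` of the monomial `∏_{i ∈ S} x_i`. -/
def evm (S : Mon n) : BF n := fun x => ∏ i ∈ S, x i

/-- The coefficient `⟨f⟩_S` of the monomial `S` in the reduced polynomial represented by
the Boolean function `f` (binary Möbius inversion: `⟨f⟩_S = ∑_{supp x ⊆ S} f(x)`). -/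
def mcoeff (f : BF n) (S : Mon n) : ZMod 2 :=
  ∑ x ∈ Finset.univ.filter (fun x : Pt n => ∀ i ∉ S, x i = 0), f x

/-- The row index `[g] = ∑_{i ∉ ind(g)} 2^i` of a monomial. -/
def rowIdx (S : Mon n) : ℕ := ∑ i ∈ Sᶜ, 2 ^ (i : ℕ)

/-- `Ovd h g` means `h ≺_o g`: `h` is a one-variable descendant of `g`, i.e. `g = h·x_i`
for some `i ∉ ind(h)`, or `g = q·x_i`, `h = q·x_j` for a monomial `q` and `j < i`. -/
def Ovd (h g : Mon n) : Prop :=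
  (∃ i ∉ h, g = insert i h) ∨
  (∃ (q : Mon n) (i j : Fin n), i ∉ q ∧ j ∉ q ∧ j < i ∧ g = insert i q ∧ h = insert j q)

/-- The standard partial order `≼` on monomials: `g ≼ h` iff some divisor `h'` of `h` with
`deg h' = deg g` dominates `g` coordinatewise after sorting the index lists increasingly. -/
def MonLE (g h : Mon n) : Prop :=
  ∃ h' ⊆ h, h'.card = g.card ∧
    List.Forall₂ (· ≤ ·) (Finset.sort g (· ≤ ·)) (Finset.sort h' (· ≤ ·))

/-- `C(I)` is a decreasing monomial code. -/
def DecMonCode (I : Set (Mon n)) : Prop := ∀ h ∈ I, ∀ g, MonLE g h → g ∈ I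

/-- The monomial code `C(I)`: the `F_2`-span of `{ev(g) : g ∈ I}`. -/
def code (I : Set (Mon n)) : Set (BF n) := ↑(Submodule.span (ZMod 2) (evm '' I))

/-- An element `(A,b)` of `LTA(n,2)`: `A` lower triangular with unit diagonal. -/
structure LTA (n : ℕ) where
  A : Matrix (Fin n) (Fin n) (ZMod 2)
  b : Pt n
  diag : ∀ i, A i i = 1
  lower : ∀ i j : Fin n, i < j → A i j = 0

/-- The affine map `x ↦ Ax + b` on points. -/
def LTA.actPt (L : LTA n) (x : Pt n) : Pt n := L.A.mulVec x + L.b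

/-- The action of `(A,b)` on `R_n` (equivalently on `F_2^N`):
`((A,b)·f)(x) = f(Ax+b)`, so that `(A,b)·ev(f) = ev((A,b)·f)`. -/
def LTA.act (L : LTA n) (f : BF n) : BF n := fun x => f (L.actPt x)

/-- Hamming weight. -/
def wt (f : BF n) : ℕ := (Finset.univ.filter (fun x => f x ≠ 0)).card

/-- Weight distribution of a set of vectors: `d ↦ |{x ∈ S : wt x = d}|`. -/
noncomputable def wdist (S : Set (BF n)) : ℕ → ℕ := fun d => Nat.card {x : BF n // x ∈ S ∧ wt x = d}

/-- Membership in the subgroup `LTA(n,2)_{h2}^{h1}`: all strictly-lower-triangular entries of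
`A` and all entries of `b` vanish except possibly the free parameters: for
`f ∈ O_{h1}∖O_{h2}∖D`, the entry `a_{s,t}` when `h1 = q·x_s`, `f = q·x_t`, `t < s`, and the
entry `b_r` when `h1 = f·x_r`; for `f ∈ O_{h2}∖O_{h1}∖D`, the entry `a_{s,t}` when
`h2 = q·x_s`, `f = q·x_t`, `t < s`, and the entry `b_r` when `h2 = f·x_r`. -/
def InSub (h1 h2 : Mon n) (O1 O2 D : Set (Mon n)) (L : LTA n) : Prop :=
  (∀ s t : Fin n, t < s → L.A s t ≠ 0 →
    (∃ f ∈ ((O1 \ O2) \ D), ∃ q : Mon n, s ∉ q ∧ t ∉ q ∧ h1 = insert s q ∧ f = insert t q) ∨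
    (∃ f ∈ ((O2 \ O1) \ D), ∃ q : Mon n, s ∉ q ∧ t ∉ q ∧ h2 = insert s q ∧ f = insert t q)) ∧
  (∀ r : Fin n, L.b r ≠ 0 →
    (∃ f ∈ ((O1 \ O2) \ D), r ∉ f ∧ h1 = insert r f) ∨
    (∃ f ∈ ((O2 \ O1) \ D), r ∉ f ∧ h2 = insert r f))

/-- The standing context: a decreasing monomial code `C(I)` with `n ≥ 1`, last frozen index
`τ = max F` where `F = {0,…,N−1} ∖ {[g] : g ∈ I}`; `h1` the monomial of `I` of smallest row
index; `h2` the monomial of `I` of smallest row index among those with `[h1] < [h2]` that are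
not one-variable descendants of `h1`; and the feasibility assumption
`|ind(h1)∖ind(h2)| ≤ 2`, `|ind(h2)∖ind(h1)| ≤ 2`. -/
structure Setup (n : ℕ) where
  npos : 1 ≤ n
  I : Set (Mon n)
  dec : DecMonCode I
  τ : ℕ
  τlt : τ < 2 ^ n
  τfrozen : τ ∉ rowIdx '' I
  τmax : ∀ m < 2 ^ n, m ∉ rowIdx '' I → m ≤ τ
  h1 : Mon n
  h1mem : h1 ∈ I
  h1min : ∀ g ∈ I, rowIdx h1 ≤ rowIdx g
  h2 : Mon n
  h2mem : h2 ∈ I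
  h12 : rowIdx h1 < rowIdx h2
  h2novd : ¬ Ovd h2 h1
  h2min : ∀ g ∈ I, rowIdx h1 < rowIdx g → ¬ Ovd g h1 → rowIdx h2 ≤ rowIdx g
  feas1 : (h1 \ h2).card ≤ 2
  feas2 : (h2 \ h1).card ≤ 2

namespace Setup

variable (C : Setup n)

/-- `O_{h1} = {f ∈ I : f ≺_o h1, [h2] < [f] < τ}`. -/
def O1 : Set (Mon n) := {f | f ∈ C.I ∧ Ovd f C.h1 ∧ rowIdx C.h2 < rowIdx f ∧ rowIdx f < C.τ}

/-- `O_{h2} = {f ∈ I : f ≺_o h2, [f] < τ}`. -/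
def O2 : Set (Mon n) := {f | f ∈ C.I ∧ Ovd f C.h2 ∧ rowIdx f < C.τ}

/-- `O^c_{h1} = {f ∈ I : f ∉ O_{h1}, [h2] < [f] < τ}`. -/
def O1c : Set (Mon n) := {f | f ∈ C.I ∧ f ∉ C.O1 ∧ rowIdx C.h2 < rowIdx f ∧ rowIdx f < C.τ}

/-- `O^c_{h2} = {f ∈ I : f ∉ O_{h2}, [h2] < [f] < τ}`. -/
def O2c : Set (Mon n) := {f | f ∈ C.I ∧ f ∉ C.O2 ∧ rowIdx C.h2 < rowIdx f ∧ rowIdx f < C.τ}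

/-- `D = {f ∈ O_{h1} ∪ O_{h2} : ∏_{j ∈ ind(h1)∩ind(h2)} x_j ∤ f}`. -/
def D : Set (Mon n) := {f | f ∈ C.O1 ∪ C.O2 ∧ ¬ (C.h1 ∩ C.h2 ⊆ f)}

/-- `T = {f ∈ I : [f] > τ}`. -/
def T : Set (Mon n) := {f | f ∈ C.I ∧ C.τ < rowIdx f}

/-- `B = ((O_{h2}∖O_{h1}) ∩ D) ∪ (O^c_{h1} ∩ O^c_{h2}) ∪ T`. -/
def B : Set (Mon n) := ((C.O2 \ C.O1) ∩ C.D) ∪ (C.O1c ∩ C.O2c) ∪ C.T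

/-- `(A,b) ∈ LTA(n,2)_{h2}^{h1}`. -/
def Mem (L : LTA n) : Prop := InSub C.h1 C.h2 C.O1 C.O2 C.D L

/-- `W = {g ∈ O^c_{h1} ∩ O^c_{h2} : ∃ (A,b) ∈ LTA(n,2)_{h2}^{h1}, ∃ p ∈ O_{h1}∖O_{h2}∖D,
⟨(A,b)·g⟩_p ≠ 0}`. -/
def W : Set (Mon n) :=
  {g | g ∈ C.O1c ∩ C.O2c ∧
    ∃ L : LTA n, C.Mem L ∧ ∃ p ∈ ((C.O1 \ C.O2) \ C.D), mcoeff (L.act (evm g)) p ≠ 0}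

/-- `L` and `L'` have equal values on all entries associated with `O_{h2}∖O_{h1}∖D`
in the definition of the subgroup `LTA(n,2)_{h2}^{h1}`. -/
def agreeO2 (L L' : LTA n) : Prop :=
  (∀ f ∈ ((C.O2 \ C.O1) \ C.D), ∀ (q : Mon n) (s t : Fin n),
      s ∉ q → t ∉ q → t < s → C.h2 = insert s q → f = insert t q → L.A s t = L'.A s t) ∧
  (∀ f ∈ ((C.O2 \ C.O1) \ C.D), ∀ r : Fin n, r ∉ f → C.h2 = insert r f → L.b r = L'.b r)

end Setup

-- ZMod 2 facts
lemma zmod2_one_of_ne (a : ZMod 2) (h : a ≠ 0) : a = 1 := by revert a; decide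
lemma zmod2_add_self (a : ZMod 2) : a + a = 0 := by revert a; decide
lemma zmod2_addone (a : ZMod 2) : a + 1 + 1 = a := by revert a; decide
lemma zmod2_addone_ne (a : ZMod 2) : a + 1 ≠ a := by revert a; decide

-- rowIdx
lemma rowIdx_insert {S : Mon n} {w : Fin n} (hw : w ∉ S) :
    rowIdx (insert w S) + 2 ^ (w : ℕ) = rowIdx S := by
  unfold rowIdx
  rw [Finset.compl_insert]
  exact Finset.sum_erase_add _ _ (by simpa using hw)

lemma rowIdx_insert_lt {S : Mon n} {w : Fin n} (hw : w ∉ S) :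
    rowIdx (insert w S) < rowIdx S := by
  have h := rowIdx_insert hw
  have : 0 < 2 ^ (w : ℕ) := Nat.pow_pos (by norm_num)
  omega

-- evm
lemma evm_union (S T : Mon n) (x : Pt n) : evm (S ∪ T) x = evm S x * evm T x := by
  unfold evm
  have h1 : (∏ i ∈ S ∪ T, x i) * ∏ i ∈ S ∩ T, x i = (∏ i ∈ S, x i) * ∏ i ∈ T, x i :=
    Finset.prod_union_inter
  have hsq : (∏ i ∈ S ∩ T, x i) * (∏ i ∈ S ∩ T, x i) = ∏ i ∈ S ∩ T, x i := by
    rw [← Finset.prod_mul_distrib]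
    refine Finset.prod_congr rfl fun i _ => ?_
    generalize x i = a; revert a; decide
  have h2 : (∏ i ∈ S ∪ T, x i) * ∏ i ∈ S ∩ T, x i = ∏ i ∈ S ∪ T, x i := by
    have hsub : S ∩ T ⊆ S ∪ T := (Finset.inter_subset_left).trans Finset.subset_union_left
    rw [← Finset.prod_sdiff hsub]
    rw [mul_assoc, hsq]
  rw [← h1, h2]

def oval (o : Option (Fin n)) (x : Pt n) : ZMod 2 := o.elim 1 x

lemma oval_toFinset (o : Option (Fin n)) (x : Pt n) : evm o.toFinset x = oval o x := by
  cases o <;> simp [oval, evm]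

def resOf (f : Mon n) (χ : Fin n → Option (Fin n)) : Mon n := f.biUnion fun s => (χ s).toFinset

lemma mem_resOf {f : Mon n} {χ : Fin n → Option (Fin n)} {j : Fin n} :
    j ∈ resOf f χ ↔ ∃ s ∈ f, χ s = some j := by
  simp [resOf, Option.mem_toFinset, Option.mem_def, eq_comm]

lemma prod_oval (f : Mon n) (χ : Fin n → Option (Fin n)) (x : Pt n) :
    (∏ i ∈ f, oval (χ i) x) = evm (resOf f χ) x := by
  classical
  induction f using Finset.induction_on with
  | empty => simp [resOf, evm]
  | @insert a s ha ih =>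
    rw [Finset.prod_insert ha, ih]
    have : resOf (insert a s) χ = (χ a).toFinset ∪ resOf s χ := Finset.biUnion_insert
    rw [this, evm_union, oval_toFinset]


def opts (L : LTA n) (i : Fin n) : Finset (Option (Fin n)) :=
  ((Finset.univ.filter fun j => j ≠ i ∧ L.A i j ≠ 0).image some) ∪
    (if L.b i ≠ 0 then {none} else ∅)

lemma mem_opts {L : LTA n} {i : Fin n} {o : Option (Fin n)} :
    o ∈ opts L i ↔ (∃ j, o = some j ∧ j ≠ i ∧ L.A i j ≠ 0) ∨ (o = none ∧ L.b i ≠ 0) := by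
  unfold opts
  constructor
  · intro h
    rcases Finset.mem_union.mp h with h | h
    · obtain ⟨j, hj, hje⟩ := Finset.mem_image.mp h
      rw [Finset.mem_filter] at hj
      exact Or.inl ⟨j, hje.symm, hj.2.1, hj.2.2⟩
    · by_cases hb : L.b i ≠ 0
      · rw [if_pos hb, Finset.mem_singleton] at h
        exact Or.inr ⟨h, hb⟩
      · rw [if_neg hb] at h
        exact absurd h (Finset.notMem_empty _)
  · rintro (⟨j, rfl, hji, hA⟩ | ⟨rfl, hb⟩)
    · exact Finset.mem_union_left _ (Finset.mem_image.mpr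
        ⟨j, Finset.mem_filter.mpr ⟨Finset.mem_univ _, hji, hA⟩, rfl⟩)
    · exact Finset.mem_union_right _ (by rw [if_pos hb]; exact Finset.mem_singleton_self _)

lemma some_self_not_mem_opts {L : LTA n} {i : Fin n} : some i ∉ opts L i := by
  rw [mem_opts]
  rintro (⟨j, hj, hne, -⟩ | ⟨h, -⟩)
  · exact hne (Option.some_inj.mp hj).symm
  · exact Option.some_ne_none i h

lemma actPt_apply (L : LTA n) (x : Pt n) (i : Fin n) :
    L.actPt x i = ∑ o ∈ insert (some i) (opts L i), oval o x := by
  classical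
  rw [Finset.sum_insert some_self_not_mem_opts]
  unfold opts
  have hdisj : Disjoint ((Finset.univ.filter fun j => j ≠ i ∧ L.A i j ≠ 0).image some)
      (if L.b i ≠ 0 then ({none} : Finset (Option (Fin n))) else ∅) := by
    rw [Finset.disjoint_left]
    intro o ho hc
    obtain ⟨j, -, hje⟩ := Finset.mem_image.mp ho
    by_cases hb : L.b i ≠ 0
    · rw [if_pos hb, Finset.mem_singleton] at hc
      subst hc
      exact Option.some_ne_none j hje
    · rw [if_neg hb] at hc
      exact Finset.notMem_empty _ hc
  rw [Finset.sum_union hdisj, Finset.sum_image (by intro a _ b _ h; exact Option.some_inj.mp h)]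
  have hbpart : (∑ o ∈ (if L.b i ≠ 0 then ({none} : Finset (Option (Fin n))) else ∅), oval o x)
      = L.b i := by
    by_cases hb : L.b i ≠ 0
    · simp [hb, oval, (zmod2_one_of_ne _ hb)]
    · push_neg at hb; simp [hb, oval]
  rw [hbpart]
  show (L.A.mulVec x + L.b) i = _
  have hmv : L.A.mulVec x i = ∑ j, L.A i j * x j := by
    simp [Matrix.mulVec, dotProduct]
  have hsplit : ∑ j, L.A i j * x j
      = (∑ j ∈ Finset.univ.erase i, L.A i j * x j) + L.A i i * x i :=
    (Finset.sum_erase_add _ _ (Finset.mem_univ i)).symm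
  have hsub : (Finset.univ.filter fun j => j ≠ i ∧ L.A i j ≠ 0) ⊆ Finset.univ.erase i := by
    intro j hj
    rw [Finset.mem_filter] at hj
    exact Finset.mem_erase.mpr ⟨hj.2.1, Finset.mem_univ j⟩
  have herase : (∑ j ∈ Finset.univ.erase i, L.A i j * x j)
      = ∑ j ∈ (Finset.univ.filter fun j => j ≠ i ∧ L.A i j ≠ 0), L.A i j * x j := by
    refine (Finset.sum_subset hsub ?_).symm
    intro j hj hj2
    rw [Finset.mem_erase] at hj
    rw [Finset.mem_filter] at hj2
    have : L.A i j = 0 := by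
      by_contra hc
      exact hj2 ⟨Finset.mem_univ j, hj.1, hc⟩
    simp [this]
  have hone : ∀ j ∈ (Finset.univ.filter fun j => j ≠ i ∧ L.A i j ≠ 0), L.A i j * x j = x j := by
    intro j hj
    rw [Finset.mem_filter] at hj
    rw [zmod2_one_of_ne _ hj.2.2, one_mul]
  simp only [Pi.add_apply, hmv, hsplit, herase, Finset.sum_congr rfl hone, L.diag i, one_mul]
  simp only [oval, Option.elim]
  ring

def Opt (L : LTA n) (f : Mon n) (i : Fin n) : Finset (Option (Fin n)) :=
  if i ∈ f then insert (some i) (opts L i) else {some i}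

lemma act_apply_eq (L : LTA n) (f : Mon n) (x : Pt n) :
    L.act (evm f) x = ∑ χ ∈ Fintype.piFinset (Opt L f), evm (resOf f χ) x := by
  classical
  have h0 : L.act (evm f) x = ∏ i ∈ f, L.actPt x i := rfl
  have h1 : (∏ i ∈ f, L.actPt x i)
      = ∏ i, (∑ o ∈ Opt L f i, (if i ∈ f then oval o x else 1)) := by
    rw [← Finset.prod_subset (Finset.subset_univ f)
      (f := fun i => ∑ o ∈ Opt L f i, (if i ∈ f then oval o x else 1))]
    · refine Finset.prod_congr rfl fun i hi => ?_
      rw [actPt_apply]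
      unfold Opt
      simp [hi]
    · intro i _ hi
      unfold Opt
      simp [hi]
  rw [h0, h1, Finset.prod_univ_sum]
  refine Finset.sum_congr rfl fun χ _ => ?_
  rw [← prod_oval]
  refine (Finset.prod_subset (Finset.subset_univ f) ?_).symm.trans
    (Finset.prod_congr rfl fun i hi => by simp [hi])
  intro i _ hi
  simp [hi]

lemma mcoeff_congr {f g : BF n} (h : ∀ x, f x = g x) (S : Mon n) : mcoeff f S = mcoeff g S :=
  Finset.sum_congr rfl fun x _ => h x

lemma mcoeff_sum {ι : Type*} (s : Finset ι) (F : ι → BF n) (g : Mon n) :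
    mcoeff (fun x => ∑ c ∈ s, F c x) g = ∑ c ∈ s, mcoeff (F c) g := by
  unfold mcoeff
  exact Finset.sum_comm

lemma mcoeff_evm (S g : Mon n) : mcoeff (evm S) g = if S = g then 1 else 0 := by
  classical
  unfold mcoeff evm
  split_ifs with hSg
  · subst hSg
    rw [Finset.sum_eq_single_of_mem (fun i => if i ∈ S then (1 : ZMod 2) else 0) ?_ ?_]
    · rw [Finset.prod_congr rfl (fun i hi => if_pos hi)]
      exact Finset.prod_const_one
    · simp only [Finset.mem_filter, Finset.mem_univ, true_and]
      intro i hi; simp [hi]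
    · intro x hx hne
      rw [Finset.mem_filter] at hx
      by_contra hprod
      apply hne
      funext i
      by_cases hi : i ∈ S
      · have : x i ≠ 0 := by
          intro h0
          exact hprod (Finset.prod_eq_zero hi h0)
        simp [hi, zmod2_one_of_ne _ this]
      · simp [hi, hx.2 i hi]
  · by_cases hsub : S ⊆ g
    · have hss : S ⊂ g := ssubset_of_subset_of_ne hsub hSg
      obtain ⟨j₀, hj₀g, hj₀S⟩ := Finset.exists_of_ssubset hss
      refine Finset.sum_involution
        (fun x _ => Function.update x j₀ (x j₀ + 1)) ?_ ?_ ?_ ?_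
      · intro x _
        have heq : (∏ i ∈ S, Function.update x j₀ (x j₀ + 1) i) = ∏ i ∈ S, x i := by
          refine Finset.prod_congr rfl fun i hi => ?_
          rw [Function.update_of_ne (by rintro rfl; exact hj₀S hi)]
        rw [heq]; exact zmod2_add_self _
      · intro x _ _
        intro hc
        have := congrFun hc j₀
        rw [Function.update_self] at this
        exact zmod2_addone_ne _ this
      · intro x hx
        rw [Finset.mem_filter] at hx ⊢
        refine ⟨Finset.mem_univ _, fun i hi => ?_⟩
        rw [Function.update_of_ne (by rintro rfl; exact hi hj₀g)]
        exact hx.2 i hi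
      · intro x _
        funext i
        by_cases hij : i = j₀
        · subst hij; simp [Function.update_self, zmod2_addone]
        · simp [Function.update_of_ne hij]
    · obtain ⟨i₀, hi₀S, hi₀g⟩ := Finset.not_subset.mp hsub
      refine Finset.sum_eq_zero fun x hx => ?_
      rw [Finset.mem_filter] at hx
      exact Finset.prod_eq_zero hi₀S (hx.2 i₀ hi₀g)

lemma mcoeff_act (L : LTA n) (f g : Mon n) :
    mcoeff (L.act (evm f)) g
      = ∑ χ ∈ Fintype.piFinset (Opt L f), (if resOf f χ = g then (1 : ZMod 2) else 0) := by
  rw [mcoeff_congr (act_apply_eq L f) g, mcoeff_sum]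
  exact Finset.sum_congr rfl fun χ _ => mcoeff_evm _ _


-- Structural lemmas
namespace Setup
variable {n : ℕ} (C : Setup n)

lemma subK1 {p : Mon n} (hp : p ∈ (C.O1 \ C.O2) \ C.D) : C.h1 ∩ C.h2 ⊆ p := by
  by_contra h
  exact hp.2 ⟨Or.inl hp.1.1, h⟩

lemma subK2 {p : Mon n} (hp : p ∈ (C.O2 \ C.O1) \ C.D) : C.h1 ∩ C.h2 ⊆ p := by
  by_contra h
  exact hp.2 ⟨Or.inr hp.1.1, h⟩

lemma side1_struct {s t : Fin n} (hts : t < s)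
    (h : ∃ p ∈ (C.O1 \ C.O2) \ C.D, ∃ q : Mon n,
      s ∉ q ∧ t ∉ q ∧ C.h1 = insert s q ∧ p = insert t q) :
    s ∈ C.h1 \ C.h2 ∧ t ∉ C.h1 ∪ C.h2 := by
  classical
  obtain ⟨p, hp, q, hsq, htq, hh1, hpq⟩ := h
  have hK : C.h1 ∩ C.h2 ⊆ p := C.subK1 hp
  have hs1 : s ∈ C.h1 := hh1 ▸ Finset.mem_insert_self s q
  have htsne : t ≠ s := ne_of_lt hts
  have hs2 : s ∉ C.h2 := by
    intro hs2
    have hsp : s ∈ p := hK (Finset.mem_inter.mpr ⟨hs1, hs2⟩)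
    rw [hpq] at hsp
    rcases Finset.mem_insert.mp hsp with h | h
    · exact htsne h.symm
    · exact hsq h
  have ht1 : t ∉ C.h1 := by
    rw [hh1]
    intro hmem
    rcases Finset.mem_insert.mp hmem with h | h
    · exact htsne h
    · exact htq h
  refine ⟨Finset.mem_sdiff.mpr ⟨hs1, hs2⟩, ?_⟩
  intro htmem
  have ht2 : t ∈ C.h2 := by
    rcases Finset.mem_union.mp htmem with h | h
    · exact absurd h ht1
    · exact h
  obtain ⟨pO1, pnO2⟩ := hp.1
  obtain ⟨pI, pOvd, hlt, hτ⟩ := pO1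
  have hq : q = C.h1.erase s := by rw [hh1, Finset.erase_insert hsq]
  set M : Mon n := insert t (C.h1 ∩ C.h2) with hM
  set A' : Mon n := (C.h1 \ C.h2).erase s with hA'
  set B' : Mon n := (C.h2 \ C.h1).erase t with hB'
  have hsA : s ∈ C.h1 \ C.h2 := Finset.mem_sdiff.mpr ⟨hs1, hs2⟩
  have htB : t ∈ C.h2 \ C.h1 := Finset.mem_sdiff.mpr ⟨ht2, ht1⟩
  have hpM : p = A' ∪ M := by
    rw [hpq, hq]
    ext j
    simp only [hA', hM, Finset.mem_insert, Finset.mem_erase, Finset.mem_union,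
      Finset.mem_inter, Finset.mem_sdiff]
    constructor
    · rintro (rfl | ⟨hjs, hj1⟩)
      · exact Or.inr (Or.inl rfl)
      · by_cases hj2 : j ∈ C.h2
        · exact Or.inr (Or.inr ⟨hj1, hj2⟩)
        · exact Or.inl ⟨hjs, hj1, hj2⟩
    · rintro (⟨hjs, hj1, hj2⟩ | rfl | ⟨hj1, hj2⟩)
      · exact Or.inr ⟨hjs, hj1⟩
      · exact Or.inl rfl
      · exact Or.inr ⟨fun he => hs2 (he ▸ hj2), hj1⟩
  have hh2M : C.h2 = B' ∪ M := by
    ext j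
    simp only [hB', hM, Finset.mem_insert, Finset.mem_erase, Finset.mem_union,
      Finset.mem_inter, Finset.mem_sdiff]
    constructor
    · intro hj2
      by_cases hjt : j = t
      · exact Or.inr (Or.inl hjt)
      · by_cases hj1 : j ∈ C.h1
        · exact Or.inr (Or.inr ⟨hj1, hj2⟩)
        · exact Or.inl ⟨hjt, hj2, hj1⟩
    · rintro (⟨_, hj2, _⟩ | rfl | ⟨_, hj2⟩) <;> [exact hj2; exact ht2; exact hj2]
  have hAcard : A'.card ≤ 1 := by
    have h1 := C.feas1
    have h2 : A'.card = (C.h1 \ C.h2).card - 1 := Finset.card_erase_of_mem hsA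
    omega
  have hBcard : B'.card ≤ 1 := by
    have h1 := C.feas2
    have h2 : B'.card = (C.h2 \ C.h1).card - 1 := Finset.card_erase_of_mem htB
    omega
  have hAmem : ∀ w ∈ A', w ∉ M ∧ w ∉ C.h2 := by
    intro w hw
    obtain ⟨hws, hw1, hw2⟩ : w ≠ s ∧ w ∈ C.h1 ∧ w ∉ C.h2 := by
      have := Finset.mem_erase.mp hw
      exact ⟨this.1, (Finset.mem_sdiff.mp this.2).1, (Finset.mem_sdiff.mp this.2).2⟩
    refine ⟨?_, hw2⟩
    rw [hM]
    intro hmem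
    rcases Finset.mem_insert.mp hmem with h | h
    · exact ht1 (h ▸ hw1)
    · exact hw2 (Finset.mem_inter.mp h).2
  have hBmem : ∀ u ∈ B', (u ∉ M ∧ u ∉ C.h1) ∧ u ∈ C.h2 := by
    intro u hu
    obtain ⟨hut, hu2, hu1⟩ : u ≠ t ∧ u ∈ C.h2 ∧ u ∉ C.h1 := by
      have := Finset.mem_erase.mp hu
      exact ⟨this.1, (Finset.mem_sdiff.mp this.2).1, (Finset.mem_sdiff.mp this.2).2⟩
    refine ⟨⟨?_, hu1⟩, hu2⟩
    rw [hM]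
    intro hmem
    rcases Finset.mem_insert.mp hmem with h | h
    · exact hut h
    · exact hu1 (Finset.mem_inter.mp h).1
  have hsingA : A' = ∅ ∨ ∃ w, A' = {w} := by
    rcases Finset.eq_empty_or_nonempty A' with h | ⟨w, hw⟩
    · exact Or.inl h
    · refine Or.inr ⟨w, Finset.eq_singleton_iff_unique_mem.mpr ⟨hw, fun b hb => ?_⟩⟩
      exact Finset.card_le_one.mp hAcard b hb w hw
  have hsingB : B' = ∅ ∨ ∃ u, B' = {u} := by
    rcases Finset.eq_empty_or_nonempty B' with h | ⟨u, hu⟩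
    · exact Or.inl h
    · refine Or.inr ⟨u, Finset.eq_singleton_iff_unique_mem.mpr ⟨hu, fun b hb => ?_⟩⟩
      exact Finset.card_le_one.mp hBcard b hb u hu
  rcases hsingA with hA0 | ⟨w, hAw⟩ <;> rcases hsingB with hB0 | ⟨u, hBu⟩
  · -- p = h2
    have : p = C.h2 := by rw [hpM, hh2M, hA0, hB0]
    rw [this] at hlt
    exact lt_irrefl _ hlt
  · -- Ovd p h2 by deletion
    have hu := hBmem u (hBu ▸ Finset.mem_singleton_self u)
    have hpeq : p = M := by rw [hpM, hA0, Finset.empty_union]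
    have hh2eq : C.h2 = insert u p := by
      rw [hh2M, hBu, hpeq, ← Finset.insert_eq]
    refine pnO2 ⟨pI, Or.inl ⟨u, ?_, hh2eq⟩, hτ⟩
    rw [hpeq]; exact hu.1.1
  · -- p = insert w h2
    have hw := hAmem w (hAw ▸ Finset.mem_singleton_self w)
    have hpeq : p = insert w C.h2 := by
      rw [hpM, hh2M, hB0, Finset.empty_union, hAw, ← Finset.insert_eq]
    have : rowIdx p < rowIdx C.h2 := by
      rw [hpeq]; exact rowIdx_insert_lt hw.2
    omega
  · have hw := hAmem w (hAw ▸ Finset.mem_singleton_self w)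
    have hu := hBmem u (hBu ▸ Finset.mem_singleton_self u)
    have hpeq : p = insert w M := by rw [hpM, hAw, ← Finset.insert_eq]
    have hh2eq : C.h2 = insert u M := by rw [hh2M, hBu, ← Finset.insert_eq]
    have hwu : w ≠ u := fun he => hw.2 (he ▸ hu.2)
    rcases lt_trichotomy w u with hlt' | heq | hgt
    · exact pnO2 ⟨pI, Or.inr ⟨M, u, w, hu.1.1, hw.1, hlt', hh2eq, hpeq⟩, hτ⟩
    · exact absurd heq hwu
    · have e1 : rowIdx p + 2 ^ (w : ℕ) = rowIdx M := hpeq ▸ rowIdx_insert hw.1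
      have e2 : rowIdx C.h2 + 2 ^ (u : ℕ) = rowIdx M := hh2eq ▸ rowIdx_insert hu.1.1
      have e3 : (2 : ℕ) ^ (u : ℕ) < 2 ^ (w : ℕ) :=
        Nat.pow_lt_pow_right (by norm_num) hgt
      omega


lemma side2_struct {s t : Fin n} (hts : t < s)
    (h : ∃ p ∈ (C.O2 \ C.O1) \ C.D, ∃ q : Mon n,
      s ∉ q ∧ t ∉ q ∧ C.h2 = insert s q ∧ p = insert t q) :
    s ∈ C.h2 \ C.h1 ∧ t ∉ C.h1 ∪ C.h2 := by
  classical
  obtain ⟨p, hp, q, hsq, htq, hh2, hpq⟩ := h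
  have hK : C.h1 ∩ C.h2 ⊆ p := C.subK2 hp
  have hs2 : s ∈ C.h2 := hh2 ▸ Finset.mem_insert_self s q
  have htsne : t ≠ s := ne_of_lt hts
  have hs1 : s ∉ C.h1 := by
    intro hs1
    have hsp : s ∈ p := hK (Finset.mem_inter.mpr ⟨hs1, hs2⟩)
    rw [hpq] at hsp
    rcases Finset.mem_insert.mp hsp with h | h
    · exact htsne h.symm
    · exact hsq h
  have ht2 : t ∉ C.h2 := by
    rw [hh2]
    intro hmem
    rcases Finset.mem_insert.mp hmem with h | h
    · exact htsne h
    · exact htq h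
  refine ⟨Finset.mem_sdiff.mpr ⟨hs2, hs1⟩, ?_⟩
  intro htmem
  have ht1 : t ∈ C.h1 := by
    rcases Finset.mem_union.mp htmem with h | h
    · exact h
    · exact absurd h ht2
  obtain ⟨pO2, pnO1⟩ := hp.1
  obtain ⟨pI, pOvd, hτ⟩ := pO2
  have hq : q = C.h2.erase s := by rw [hh2, Finset.erase_insert hsq]
  have hgt : rowIdx C.h2 < rowIdx p := by
    have e1 : rowIdx p + 2 ^ (t : ℕ) = rowIdx q := hpq ▸ rowIdx_insert htq
    have e2 : rowIdx C.h2 + 2 ^ (s : ℕ) = rowIdx q := hh2 ▸ rowIdx_insert hsq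
    have e3 : (2 : ℕ) ^ (t : ℕ) < 2 ^ (s : ℕ) :=
      Nat.pow_lt_pow_right (by norm_num) hts
    omega
  set M : Mon n := insert t (C.h1 ∩ C.h2) with hM
  set A' : Mon n := (C.h1 \ C.h2).erase t with hA'
  set B' : Mon n := (C.h2 \ C.h1).erase s with hB'
  have hsB : s ∈ C.h2 \ C.h1 := Finset.mem_sdiff.mpr ⟨hs2, hs1⟩
  have htA : t ∈ C.h1 \ C.h2 := Finset.mem_sdiff.mpr ⟨ht1, ht2⟩
  have hpM : p = B' ∪ M := by
    rw [hpq, hq]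
    ext j
    simp only [hB', hM, Finset.mem_insert, Finset.mem_erase, Finset.mem_union,
      Finset.mem_inter, Finset.mem_sdiff]
    constructor
    · rintro (rfl | ⟨hjs, hj2⟩)
      · exact Or.inr (Or.inl rfl)
      · by_cases hj1 : j ∈ C.h1
        · exact Or.inr (Or.inr ⟨hj1, hj2⟩)
        · exact Or.inl ⟨hjs, hj2, hj1⟩
    · rintro (⟨hjs, hj2, hj1⟩ | rfl | ⟨hj1, hj2⟩)
      · exact Or.inr ⟨hjs, hj2⟩
      · exact Or.inl rfl
      · exact Or.inr ⟨fun he => hs1 (he ▸ hj1), hj2⟩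
  have hh1M : C.h1 = A' ∪ M := by
    ext j
    simp only [hA', hM, Finset.mem_insert, Finset.mem_erase, Finset.mem_union,
      Finset.mem_inter, Finset.mem_sdiff]
    constructor
    · intro hj1
      by_cases hjt : j = t
      · exact Or.inr (Or.inl hjt)
      · by_cases hj2 : j ∈ C.h2
        · exact Or.inr (Or.inr ⟨hj1, hj2⟩)
        · exact Or.inl ⟨hjt, hj1, hj2⟩
    · rintro (⟨_, hj1, _⟩ | rfl | ⟨hj1, _⟩) <;> [exact hj1; exact ht1; exact hj1]
  have hAcard : A'.card ≤ 1 := by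
    have h1 := C.feas1
    have h2 : A'.card = (C.h1 \ C.h2).card - 1 := Finset.card_erase_of_mem htA
    omega
  have hBcard : B'.card ≤ 1 := by
    have h1 := C.feas2
    have h2 : B'.card = (C.h2 \ C.h1).card - 1 := Finset.card_erase_of_mem hsB
    omega
  have hAmem : ∀ w ∈ A', (w ∉ M ∧ w ∉ C.h2) ∧ w ∈ C.h1 := by
    intro w hw
    obtain ⟨hwt, hw1, hw2⟩ : w ≠ t ∧ w ∈ C.h1 ∧ w ∉ C.h2 := by
      have := Finset.mem_erase.mp hw
      exact ⟨this.1, (Finset.mem_sdiff.mp this.2).1, (Finset.mem_sdiff.mp this.2).2⟩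
    refine ⟨⟨?_, hw2⟩, hw1⟩
    rw [hM]
    intro hmem
    rcases Finset.mem_insert.mp hmem with h | h
    · exact hwt h
    · exact hw2 (Finset.mem_inter.mp h).2
  have hBmem : ∀ u ∈ B', (u ∉ M ∧ u ∉ C.h1) := by
    intro u hu
    obtain ⟨hus, hu2, hu1⟩ : u ≠ s ∧ u ∈ C.h2 ∧ u ∉ C.h1 := by
      have := Finset.mem_erase.mp hu
      exact ⟨this.1, (Finset.mem_sdiff.mp this.2).1, (Finset.mem_sdiff.mp this.2).2⟩
    refine ⟨?_, hu1⟩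
    rw [hM]
    intro hmem
    rcases Finset.mem_insert.mp hmem with h | h
    · exact hu1 (h ▸ ht1)
    · exact hu1 (Finset.mem_inter.mp h).1
  have hsingA : A' = ∅ ∨ ∃ w, A' = {w} := by
    rcases Finset.eq_empty_or_nonempty A' with h | ⟨w, hw⟩
    · exact Or.inl h
    · refine Or.inr ⟨w, Finset.eq_singleton_iff_unique_mem.mpr ⟨hw, fun b hb => ?_⟩⟩
      exact Finset.card_le_one.mp hAcard b hb w hw
  have hsingB : B' = ∅ ∨ ∃ u, B' = {u} := by
    rcases Finset.eq_empty_or_nonempty B' with h | ⟨u, hu⟩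
    · exact Or.inl h
    · refine Or.inr ⟨u, Finset.eq_singleton_iff_unique_mem.mpr ⟨hu, fun b hb => ?_⟩⟩
      exact Finset.card_le_one.mp hBcard b hb u hu
  have h12 := C.h12
  rcases hsingA with hA0 | ⟨w, hAw⟩ <;> rcases hsingB with hB0 | ⟨v, hBv⟩
  · -- p = h1
    have : p = C.h1 := by rw [hpM, hh1M, hA0, hB0]
    rw [this] at hgt
    omega
  · -- p = insert v h1
    have hv := hBmem v (hBv ▸ Finset.mem_singleton_self v)
    have hpeq : p = insert v C.h1 := by
      rw [hpM, hh1M, hA0, Finset.empty_union, hBv, ← Finset.insert_eq]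
    have : rowIdx p < rowIdx C.h1 := by
      rw [hpeq]
      exact rowIdx_insert_lt (by rw [hh1M, hA0, Finset.empty_union]; exact hv.1)
    omega
  · -- Ovd p h1 by deletion
    have hw := hAmem w (hAw ▸ Finset.mem_singleton_self w)
    have hpeq : p = M := by rw [hpM, hB0, Finset.empty_union]
    have hh1eq : C.h1 = insert w p := by
      rw [hh1M, hAw, hpeq, ← Finset.insert_eq]
    refine pnO1 ⟨pI, Or.inl ⟨w, ?_, hh1eq⟩, hgt, hτ⟩
    rw [hpeq]; exact hw.1.1
  · have hw := hAmem w (hAw ▸ Finset.mem_singleton_self w)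
    have hv := hBmem v (hBv ▸ Finset.mem_singleton_self v)
    have hpeq : p = insert v M := by rw [hpM, hBv, ← Finset.insert_eq]
    have hh1eq : C.h1 = insert w M := by rw [hh1M, hAw, ← Finset.insert_eq]
    have hvw : v ≠ w := fun he => hv.2 (he ▸ hw.2)
    rcases lt_trichotomy v w with hlt' | heq | hgt'
    · exact pnO1 ⟨pI, Or.inr ⟨M, w, v, hw.1.1, hv.1, hlt', hh1eq, hpeq⟩, hgt, hτ⟩
    · exact absurd heq hvw
    · have e1 : rowIdx p + 2 ^ (v : ℕ) = rowIdx M := hpeq ▸ rowIdx_insert hv.1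
      have e2 : rowIdx C.h1 + 2 ^ (w : ℕ) = rowIdx M := hh1eq ▸ rowIdx_insert hw.1.1
      have e3 : (2 : ℕ) ^ (w : ℕ) < 2 ^ (v : ℕ) :=
        Nat.pow_lt_pow_right (by norm_num) hgt'
      omega


lemma brow1_struct {r : Fin n}
    (h : ∃ p ∈ (C.O1 \ C.O2) \ C.D, r ∉ p ∧ C.h1 = insert r p) :
    r ∈ C.h1 \ C.h2 := by
  obtain ⟨p, hp, hrp, hh⟩ := h
  have hr1 : r ∈ C.h1 := hh ▸ Finset.mem_insert_self r p
  refine Finset.mem_sdiff.mpr ⟨hr1, fun hr2 => ?_⟩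
  exact hrp (C.subK1 hp (Finset.mem_inter.mpr ⟨hr1, hr2⟩))

lemma brow2_struct {r : Fin n}
    (h : ∃ p ∈ (C.O2 \ C.O1) \ C.D, r ∉ p ∧ C.h2 = insert r p) :
    r ∈ C.h2 \ C.h1 := by
  obtain ⟨p, hp, hrp, hh⟩ := h
  have hr2 : r ∈ C.h2 := hh ▸ Finset.mem_insert_self r p
  refine Finset.mem_sdiff.mpr ⟨hr2, fun hr1 => ?_⟩
  exact hrp (C.subK2 hp (Finset.mem_inter.mpr ⟨hr1, hr2⟩))

/-- Every nonzero subdiagonal entry of a subgroup element sits on a row of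
`h1Δh2` and its column (target) avoids `h1 ∪ h2`. -/
lemma row_of_A {L : LTA n} (hL : C.Mem L) {s t : Fin n} (hts : t < s)
    (hA : L.A s t ≠ 0) :
    s ∈ (C.h1 \ C.h2) ∪ (C.h2 \ C.h1) ∧ t ∉ C.h1 ∪ C.h2 := by
  rcases hL.1 s t hts hA with h | h
  · obtain ⟨h1, h2⟩ := C.side1_struct hts h
    exact ⟨Finset.mem_union_left _ h1, h2⟩
  · obtain ⟨h1, h2⟩ := C.side2_struct hts h
    exact ⟨Finset.mem_union_right _ h1, h2⟩

lemma row_of_b {L : LTA n} (hL : C.Mem L) {r : Fin n} (hb : L.b r ≠ 0) :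
    r ∈ (C.h1 \ C.h2) ∪ (C.h2 \ C.h1) := by
  rcases hL.2 r hb with h | h
  · exact Finset.mem_union_left _ (C.brow1_struct h)
  · exact Finset.mem_union_right _ (C.brow2_struct h)

lemma row_mem_union {s : Fin n} (h : s ∈ (C.h1 \ C.h2) ∪ (C.h2 \ C.h1)) :
    s ∈ C.h1 ∪ C.h2 := by
  rcases Finset.mem_union.mp h with h | h
  · exact Finset.mem_union_left _ (Finset.mem_sdiff.mp h).1
  · exact Finset.mem_union_right _ (Finset.mem_sdiff.mp h).1

end Setup

/-- Specification of an admissible choice function. -/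
lemma chi_spec {n : ℕ} {L : LTA n} {f : Mon n} {χ : Fin n → Option (Fin n)}
    (hχ : χ ∈ Fintype.piFinset (Opt L f)) :
    (∀ s, s ∉ f → χ s = some s) ∧
    (∀ s ∈ f, χ s = some s ∨ (χ s = none ∧ L.b s ≠ 0) ∨
      ∃ t, χ s = some t ∧ t < s ∧ L.A s t ≠ 0) := by
  rw [Fintype.mem_piFinset] at hχ
  constructor
  · intro s hs
    have := hχ s
    rw [Opt, if_neg hs, Finset.mem_singleton] at this
    exact this
  · intro s hs
    have h := hχ s
    rw [Opt, if_pos hs] at h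
    rcases Finset.mem_insert.mp h with h | h
    · exact Or.inl h
    · rw [mem_opts] at h
      rcases h with ⟨j, hj, hji, hA⟩ | ⟨hn, hb⟩
      · refine Or.inr (Or.inr ⟨j, hj, ?_, hA⟩)
        have hns : ¬ s < j := fun hc => hA (L.lower s j hc)
        exact lt_of_le_of_ne (le_of_not_gt hns) hji
      · exact Or.inr (Or.inl ⟨hn, hb⟩)


/-- for `(A,b) ∈ LTA(n,2)_{h2}^{h1}`, `g ∈ W` and
`f ∈ (O^c_{h1} ∩ O^c_{h2}) ∖ W`, the coefficient `⟨(A,b)·f⟩_g` vanishes. -/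
theorem stmt15 {n : ℕ} (C : Setup n) (L : LTA n) (hL : C.Mem L)
    (g : Mon n) (hg : g ∈ C.W)
    (f : Mon n) (hf : f ∈ (C.O1c ∩ C.O2c) \ C.W) :
    mcoeff (L.act (evm f)) g = 0 := by
  classical
  by_contra hne
  obtain ⟨hgOO, L₀, hL₀, p, hpP1, hpc⟩ := hg
  obtain ⟨hfOO, hfW⟩ := hf
  rw [mcoeff_act] at hne
  obtain ⟨χ₁, hχ₁pi, hχ₁⟩ := Finset.exists_ne_zero_of_sum_ne_zero hne
  have hgres : resOf f χ₁ = g := by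
    by_contra hc; rw [if_neg hc] at hχ₁; exact hχ₁ rfl
  rw [mcoeff_act] at hpc
  obtain ⟨χ₂, hχ₂pi, hχ₂⟩ := Finset.exists_ne_zero_of_sum_ne_zero hpc
  have hpres : resOf g χ₂ = p := by
    by_contra hc; rw [if_neg hc] at hχ₂; exact hχ₂ rfl
  obtain ⟨hsp₁, hsp₁'⟩ := chi_spec hχ₁pi
  obtain ⟨hsp₂, hsp₂'⟩ := chi_spec hχ₂pi
  have row₁ : ∀ s ∈ f, χ₁ s ≠ some s → s ∈ (C.h1 \ C.h2) ∪ (C.h2 \ C.h1) := by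
    intro s hs hne'
    rcases hsp₁' s hs with h | ⟨hn, hb⟩ | ⟨t, hteq, hlt', hA⟩
    · exact absurd h hne'
    · exact C.row_of_b hL hb
    · exact (C.row_of_A hL hlt' hA).1
  have tgt₁ : ∀ s ∈ f, ∀ j, χ₁ s = some j → j ≠ s → j ∉ C.h1 ∪ C.h2 := by
    intro s hs j hj hjs
    rcases hsp₁' s hs with h | ⟨hn, _⟩ | ⟨t, hteq, hlt', hA⟩
    · exact absurd (Option.some_inj.mp (hj.symm.trans h)) hjs
    · rw [hn] at hj; exact absurd hj (by simp)
    · have : t = j := Option.some_inj.mp (hteq.symm.trans hj)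
      exact this ▸ (C.row_of_A hL hlt' hA).2
  have row₂ : ∀ s ∈ g, χ₂ s ≠ some s → s ∈ (C.h1 \ C.h2) ∪ (C.h2 \ C.h1) := by
    intro s hs hne'
    rcases hsp₂' s hs with h | ⟨hn, hb⟩ | ⟨t, hteq, hlt', hA⟩
    · exact absurd h hne'
    · exact C.row_of_b hL₀ hb
    · exact (C.row_of_A hL₀ hlt' hA).1
  have tgt₂ : ∀ s ∈ g, ∀ j, χ₂ s = some j → j ≠ s → j ∉ C.h1 ∪ C.h2 := by
    intro s hs j hj hjs
    rcases hsp₂' s hs with h | ⟨hn, _⟩ | ⟨t, hteq, hlt', hA⟩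
    · exact absurd (Option.some_inj.mp (hj.symm.trans h)) hjs
    · rw [hn] at hj; exact absurd hj (by simp)
    · have : t = j := Option.some_inj.mp (hteq.symm.trans hj)
      exact this ▸ (C.row_of_A hL₀ hlt' hA).2
  set E₂ : Finset (Fin n) := g.filter (fun s => χ₂ s ≠ some s) with hE₂def
  have hE₂ : ∀ s ∈ E₂, s ∈ f ∧ χ₁ s = some s ∧ s ∈ g := by
    intro s hs
    have hsg : s ∈ g := (Finset.mem_filter.mp hs).1
    have hsne : χ₂ s ≠ some s := (Finset.mem_filter.mp hs).2
    have hs12 : s ∈ C.h1 ∪ C.h2 := C.row_mem_union (row₂ s hsg hsne)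
    obtain ⟨u, huf, hu⟩ := mem_resOf.mp (hgres ▸ hsg : s ∈ resOf f χ₁)
    by_cases hus : u = s
    · subst hus; exact ⟨huf, hu, hsg⟩
    · exact absurd hs12 (tgt₁ u huf s hu (fun he => hus he.symm))
  set χs : Fin n → Option (Fin n) := fun s => if s ∈ E₂ then χ₂ s else χ₁ s with hχsdef
  have hχsE : ∀ s ∈ E₂, χs s = χ₂ s := fun s hs => by rw [hχsdef]; exact if_pos hs
  have hχsN : ∀ s, s ∉ E₂ → χs s = χ₁ s := fun s hs => by rw [hχsdef]; exact if_neg hs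
  -- the spliced transformation
  have hlow : ∀ i j : Fin n, i < j →
      (if j = i then (1 : ZMod 2) else if i ∈ f ∧ χs i = some j then 1 else 0) = 0 := by
    intro i j hij
    rw [if_neg (ne_of_gt hij), if_neg]
    rintro ⟨hif, hsome⟩
    by_cases hiE : i ∈ E₂
    · rw [hχsE i hiE] at hsome
      rcases hsp₂' i (hE₂ i hiE).2.2 with h | ⟨hn, _⟩ | ⟨t, hteq, hlt', _⟩
      · exact absurd (Option.some_inj.mp (hsome.symm.trans h)) (ne_of_gt hij)
      · rw [hn] at hsome; exact absurd hsome (by simp)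
      · have : t = j := Option.some_inj.mp (hteq.symm.trans hsome)
        exact absurd hij (not_lt_of_gt (this ▸ hlt'))
    · rw [hχsN i hiE] at hsome
      rcases hsp₁' i hif with h | ⟨hn, _⟩ | ⟨t, hteq, hlt', _⟩
      · exact absurd (Option.some_inj.mp (hsome.symm.trans h)) (ne_of_gt hij)
      · rw [hn] at hsome; exact absurd hsome (by simp)
      · have : t = j := Option.some_inj.mp (hteq.symm.trans hsome)
        exact absurd hij (not_lt_of_gt (this ▸ hlt'))
  let L₂ : LTA n :=
    ⟨fun s t => if t = s then 1 else if s ∈ f ∧ χs s = some t then 1 else 0,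
     fun s => if s ∈ f ∧ χs s = none then 1 else 0,
     fun i => by simp, hlow⟩
  have hA₂ : ∀ s t : Fin n, t ≠ s → L₂.A s t ≠ 0 → s ∈ f ∧ χs s = some t := by
    intro s t hts h
    by_contra hc
    apply h
    show (if t = s then (1 : ZMod 2) else if s ∈ f ∧ χs s = some t then 1 else 0) = 0
    rw [if_neg hts, if_neg hc]
  have hA₂' : ∀ s t : Fin n, t ≠ s → s ∈ f → χs s = some t → L₂.A s t ≠ 0 := by
    intro s t hts hsf hsome
    show (if t = s then (1 : ZMod 2) else if s ∈ f ∧ χs s = some t then 1 else 0) ≠ 0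
    rw [if_neg hts, if_pos ⟨hsf, hsome⟩]
    exact one_ne_zero
  have hb₂ : ∀ r : Fin n, L₂.b r ≠ 0 → r ∈ f ∧ χs r = none := by
    intro r h
    by_contra hc
    apply h
    show (if r ∈ f ∧ χs r = none then (1 : ZMod 2) else 0) = 0
    rw [if_neg hc]
  have hb₂' : ∀ r : Fin n, r ∈ f → χs r = none → L₂.b r ≠ 0 := by
    intro r hrf hnone
    show (if r ∈ f ∧ χs r = none then (1 : ZMod 2) else 0) ≠ 0
    rw [if_pos ⟨hrf, hnone⟩]
    exact one_ne_zero
  have memL₂ : C.Mem L₂ := by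
    constructor
    · intro s t hts hA
      obtain ⟨hsf, hsome⟩ := hA₂ s t (ne_of_lt hts) hA
      by_cases hsE : s ∈ E₂
      · rw [hχsE s hsE] at hsome
        rcases hsp₂' s (hE₂ s hsE).2.2 with h | ⟨hn, _⟩ | ⟨t', hteq, hlt', hA'⟩
        · exact absurd (Option.some_inj.mp (hsome.symm.trans h)) (ne_of_lt hts)
        · rw [hn] at hsome; exact absurd hsome (by simp)
        · have ht' : t' = t := Option.some_inj.mp (hteq.symm.trans hsome)
          exact hL₀.1 s t hts (ht' ▸ hA')
      · rw [hχsN s hsE] at hsome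
        rcases hsp₁' s hsf with h | ⟨hn, _⟩ | ⟨t', hteq, hlt', hA'⟩
        · exact absurd (Option.some_inj.mp (hsome.symm.trans h)) (ne_of_lt hts)
        · rw [hn] at hsome; exact absurd hsome (by simp)
        · have ht' : t' = t := Option.some_inj.mp (hteq.symm.trans hsome)
          exact hL.1 s t hts (ht' ▸ hA')
    · intro r hb
      obtain ⟨hrf, hnone⟩ := hb₂ r hb
      by_cases hrE : r ∈ E₂
      · rw [hχsE r hrE] at hnone
        rcases hsp₂' r (hE₂ r hrE).2.2 with h | ⟨hn, hb'⟩ | ⟨t', hteq, _, _⟩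
        · rw [h] at hnone; exact absurd hnone (by simp)
        · exact hL₀.2 r hb'
        · rw [hteq] at hnone; exact absurd hnone (by simp)
      · rw [hχsN r hrE] at hnone
        rcases hsp₁' r hrf with h | ⟨hn, hb'⟩ | ⟨t', hteq, _, _⟩
        · rw [h] at hnone; exact absurd hnone (by simp)
        · exact hL.2 r hb'
        · rw [hteq] at hnone; exact absurd hnone (by simp)
  have hpi : χs ∈ Fintype.piFinset (Opt L₂ f) := by
    rw [Fintype.mem_piFinset]
    intro i
    by_cases hif : i ∈ f
    · rw [Opt, if_pos hif]
      rcases hoc : χs i with _ | t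
      · refine Finset.mem_insert.mpr (Or.inr (mem_opts.mpr (Or.inr ⟨rfl, ?_⟩)))
        exact hb₂' i hif hoc
      · by_cases hti : t = i
        · subst hti; exact Finset.mem_insert_self _ _
        · refine Finset.mem_insert.mpr (Or.inr (mem_opts.mpr (Or.inl ⟨t, rfl, hti, ?_⟩)))
          exact hA₂' i t hti hif hoc
    · rw [Opt, if_neg hif, Finset.mem_singleton]
      have hiE : i ∉ E₂ := fun h => hif (hE₂ i h).1
      rw [hχsN i hiE]
      exact hsp₁ i hif
  have hres : resOf f χs = p := by
    ext j
    constructor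
    · intro hj
      obtain ⟨s, hsf, hs⟩ := mem_resOf.mp hj
      by_cases hsE : s ∈ E₂
      · rw [hχsE s hsE] at hs
        exact hpres ▸ mem_resOf.mpr ⟨s, (hE₂ s hsE).2.2, hs⟩
      · rw [hχsN s hsE] at hs
        have hjg : j ∈ g := hgres ▸ mem_resOf.mpr ⟨s, hsf, hs⟩
        have hjE : j ∉ E₂ := by
          intro hjE2
          have hj12 := C.row_mem_union
            (row₂ j (Finset.mem_filter.mp hjE2).1 (Finset.mem_filter.mp hjE2).2)
          by_cases hjs : j = s
          · exact hsE (hjs ▸ hjE2)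
          · exact (tgt₁ s hsf j hs hjs) hj12
        have hfix : χ₂ j = some j := by
          by_contra hc
          exact hjE (Finset.mem_filter.mpr ⟨hjg, hc⟩)
        exact hpres ▸ mem_resOf.mpr ⟨j, hjg, hfix⟩
    · intro hjp
      obtain ⟨u, hug, hu⟩ := mem_resOf.mp (hpres ▸ hjp : j ∈ resOf g χ₂)
      by_cases huE : u ∈ E₂
      · exact mem_resOf.mpr ⟨u, (hE₂ u huE).1, by rw [hχsE u huE]; exact hu⟩
      · have hfix : χ₂ u = some u := by
          by_contra hc
          exact huE (Finset.mem_filter.mpr ⟨hug, hc⟩)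
        have hju : j = u := (Option.some_inj.mp (hfix.symm.trans hu)).symm
        subst hju
        obtain ⟨s, hsf, hs₁⟩ := mem_resOf.mp (hgres ▸ hug : j ∈ resOf f χ₁)
        by_cases hsE : s ∈ E₂
        · have hfix₁ : χ₁ s = some s := (hE₂ s hsE).2.1
          have : j = s := (Option.some_inj.mp (hfix₁.symm.trans hs₁)).symm
          exact absurd (this ▸ hsE) huE
        · exact mem_resOf.mpr ⟨s, hsf, by rw [hχsN s hsE]; exact hs₁⟩
  have huniq : ∀ χ ∈ Fintype.piFinset (Opt L₂ f), resOf f χ = p → χ = χs := by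
    intro χ hχpi hχres
    obtain ⟨hout, hin⟩ := chi_spec hχpi
    funext s
    by_cases hsf : s ∈ f
    · have hopt : ∀ o ∈ opts L₂ s, o = χs s ∧ χs s ≠ some s := by
        intro o ho
        rcases mem_opts.mp ho with ⟨j, rfl, hji, hA⟩ | ⟨rfl, hb⟩
        · obtain ⟨-, hcs⟩ := hA₂ s j hji hA
          exact ⟨hcs.symm, by rw [hcs]; exact fun he => hji (Option.some_inj.mp he)⟩
        · obtain ⟨-, hcs⟩ := hb₂ s hb
          exact ⟨hcs.symm, by rw [hcs]; simp⟩
      have hχmem : χ s ∈ insert (some s) (opts L₂ s) := by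
        have := (Fintype.mem_piFinset.mp hχpi) s
        rwa [Opt, if_pos hsf] at this
      rcases Finset.mem_insert.mp hχmem with hcs | hcs
      · by_cases hss : χs s = some s
        · rw [hcs, hss]
        · exfalso
          have hrow : s ∈ C.h1 ∪ C.h2 := by
            by_cases hsE : s ∈ E₂
            · exact C.row_mem_union
                (row₂ s (Finset.mem_filter.mp hsE).1 (Finset.mem_filter.mp hsE).2)
            · have hne₁ : χ₁ s ≠ some s := by rw [← hχsN s hsE]; exact hss
              exact C.row_mem_union (row₁ s hsf hne₁)
          have hsp : s ∈ p := hχres ▸ mem_resOf.mpr ⟨s, hsf, hcs⟩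
          obtain ⟨u, huf, hu⟩ := mem_resOf.mp (hres ▸ hsp : s ∈ resOf f χs)
          by_cases hus : u = s
          · exact hss (hus ▸ hu)
          · by_cases huE : u ∈ E₂
            · exact (tgt₂ u (hE₂ u huE).2.2 s (by rw [← hχsE u huE]; exact hu)
                (fun he => hus he.symm)) hrow
            · exact (tgt₁ u huf s (by rw [← hχsN u huE]; exact hu)
                (fun he => hus he.symm)) hrow
      · exact (hopt _ hcs).1
    · have hsE : s ∉ E₂ := fun h => hsf (hE₂ s h).1
      rw [hout s hsf, hχsN s hsE, hsp₁ s hsf]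
  have hcoef : mcoeff (L₂.act (evm f)) p = 1 := by
    rw [mcoeff_act]
    rw [Finset.sum_eq_single_of_mem χs hpi ?_]
    · rw [if_pos hres]
    · intro χ hχpi hχne
      rw [if_neg]
      intro hr
      exact hχne (huniq χ hχpi hr)
  exact hfW ⟨hfOO, L₂, memL₂, p, hpP1, by rw [hcoef]; exact one_ne_zero⟩
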